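/- Let f_A and f_* be neighbor functions, each unbounded above, with inverses g_A and g_* on [f_A(0), ∞) and [f_*(0), ∞) respectively, and let δ_A > 0. Assume that for all 0 ≤ x₁ ≤ x₂ one has f_*(x₂) − f_*(x₁) ≤ (f_A(x₂) − f_A(x₁))/δ_A. Then for every x ≥ 0 the uncertainty interval of (f_A, δ_A) around x is contained in the uncertainty interval of (f_*, 1) around x; that is, g_*(max(f_*(0), f_*(x) − 1)) ≤ g_A(max(f_A(0), f_A(x) − δ_A)) and g_A(f_A(x) + δ_A) ≤ g_*(f_*(x) + 1). -/

import Mathlib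

/-- A neighbor function: strictly increasing, continuous and concave on `[0, ∞)`,
and such that `x ↦ f (exp x)` is convex on `ℝ`. -/
def IsNeighborFun (f : ℝ → ℝ) : Prop :=
  StrictMonoOn f (Set.Ici (0 : ℝ)) ∧ ContinuousOn f (Set.Ici (0 : ℝ)) ∧
    ConcaveOn ℝ (Set.Ici (0 : ℝ)) f ∧ ConvexOn ℝ Set.univ (fun x => f (Real.exp x))

/-- Combining neighbor functions: if the secants of `f⋆` are dominated by those of `f_A / δ_A`,
then every `(f_A, δ_A)`-uncertainty interval is contained in the `(f⋆, 1)`-uncertainty interval. -/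
theorem combined_uncertainty_interval_contains (fA fStar gA gStar : ℝ → ℝ)
    (hfA : IsNeighborFun fA) (hfStar : IsNeighborFun fStar)
    (hubA : ∀ M : ℝ, ∃ x : ℝ, 0 ≤ x ∧ M ≤ fA x)
    (hubStar : ∀ M : ℝ, ∃ x : ℝ, 0 ≤ x ∧ M ≤ fStar x)
    (hgA0 : ∀ a : ℝ, fA 0 ≤ a → 0 ≤ gA a)
    (hgAf : ∀ x : ℝ, 0 ≤ x → gA (fA x) = x)
    (hfAg : ∀ a : ℝ, fA 0 ≤ a → fA (gA a) = a)
    (hgStar0 : ∀ a : ℝ, fStar 0 ≤ a → 0 ≤ gStar a)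
    (hgStarf : ∀ x : ℝ, 0 ≤ x → gStar (fStar x) = x)
    (hfStarg : ∀ a : ℝ, fStar 0 ≤ a → fStar (gStar a) = a)
    (δA : ℝ) (hδA : 0 < δA)
    (hsec : ∀ x₁ x₂ : ℝ, 0 ≤ x₁ → x₁ ≤ x₂ →
      fStar x₂ - fStar x₁ ≤ (fA x₂ - fA x₁) / δA) :
    ∀ x : ℝ, 0 ≤ x →
      gStar (max (fStar 0) (fStar x - 1)) ≤ gA (max (fA 0) (fA x - δA)) ∧
        gA (fA x + δA) ≤ gStar (fStar x + 1) := by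
  obtain ⟨hA, -, -, -⟩ := hfA
  obtain ⟨hS, -, -, -⟩ := hfStar
  have ginvMono : ∀ (f g : ℝ → ℝ), StrictMonoOn f (Set.Ici 0) →
      (∀ a, f 0 ≤ a → 0 ≤ g a) → (∀ a, f 0 ≤ a → f (g a) = a) →
      ∀ b c, f 0 ≤ b → b ≤ c → g b ≤ g c := by
    intro f g hf hg0 hfg b c hb hbc
    by_contra h
    push_neg at h
    have := hf (Set.mem_Ici.mpr (hg0 c (hb.trans hbc))) (Set.mem_Ici.mpr (hg0 b hb)) h
    rw [hfg b hb, hfg c (hb.trans hbc)] at this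
    linarith
  intro x hx
  have hfA0x : fA 0 ≤ fA x := by
    rcases eq_or_lt_of_le hx with h | h
    · rw [← h]
    · exact le_of_lt (hA Set.self_mem_Ici (Set.mem_Ici.mpr hx) h)
  have hfS0x : fStar 0 ≤ fStar x := by
    rcases eq_or_lt_of_le hx with h | h
    · rw [← h]
    · exact le_of_lt (hS Set.self_mem_Ici (Set.mem_Ici.mpr hx) h)
  constructor
  · -- lower endpoints
    set a := max (fA 0) (fA x - δA) with ha_def
    have ha : fA 0 ≤ a := le_max_left _ _
    set z := gA a with hz_def
    have hz0 : 0 ≤ z := hgA0 _ ha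
    have hfz : fA z = a := hfAg _ ha
    have hzx : z ≤ x := by
      by_contra h
      push_neg at h
      have h1 := hA (Set.mem_Ici.mpr hx) (Set.mem_Ici.mpr hz0) h
      have h2 : fA z ≤ fA x := by
        rw [hfz]; exact max_le hfA0x (by linarith)
      linarith
    have hsz := hsec z x hz0 hzx
    have hfz' : fA x - fA z ≤ δA := by
      rw [hfz]
      have := le_max_right (fA 0) (fA x - δA)
      linarith
    have h3 : fStar x - 1 ≤ fStar z := by
      have hq : (fA x - fA z) / δA ≤ 1 := by
        rw [div_le_one hδA]; exact hfz'
      linarith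
    have hfS0z : fStar 0 ≤ fStar z := by
      rcases eq_or_lt_of_le hz0 with h | h
      · rw [← h]
      · exact le_of_lt (hS Set.self_mem_Ici (Set.mem_Ici.mpr hz0) h)
    have h4 : max (fStar 0) (fStar x - 1) ≤ fStar z := max_le hfS0z h3
    have h5 := ginvMono fStar gStar hS hgStar0 hfStarg (max (fStar 0) (fStar x - 1))
      (fStar z) (le_max_left _ _) h4
    rw [hgStarf z hz0] at h5
    exact h5
  · -- upper endpoints
    have hay : fA 0 ≤ fA x + δA := by linarith
    set y := gA (fA x + δA) with hy_def
    have hy0 : 0 ≤ y := hgA0 _ hay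
    have hfy : fA y = fA x + δA := hfAg _ hay
    have hxy : x ≤ y := by
      by_contra h
      push_neg at h
      have := hA (Set.mem_Ici.mpr hy0) (Set.mem_Ici.mpr hx) h
      linarith
    have h1 := hsec x y hx hxy
    have h2 : fStar y ≤ fStar x + 1 := by
      rw [hfy] at h1
      have : (fA x + δA - fA x) / δA = 1 := by field_simp; ring
      linarith
    have hfS0y : fStar 0 ≤ fStar y := by
      rcases eq_or_lt_of_le hy0 with h | h
      · rw [← h]
      · exact le_of_lt (hS Set.self_mem_Ici (Set.mem_Ici.mpr hy0) h)
    have h6 := ginvMono fStar gStar hS hgStar0 hfStarg (fStar y) (fStar x + 1) hfS0y h2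
    rw [hgStarf y hy0] at h6
    exact h6
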